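/- arXiv:1402.6918 — 9 statements merged into one kernel-verified Lean document; each statement's English description precedes it below -/
import Mathlib

section
/- Suppose K = G ⋈ H is an internal Zappa–Szép product of monoids and H is conical (xy = 1 implies x = 1 and y = 1). Then for all x, y ∈ K, if xy ∈ G then x ∈ G and y ∈ G. -/
namespace ZSPaper

/-- Internal Zappa–Szép product: every element of `K` has a unique `GH`-decomposition
and a unique `HG`-decomposition. -/
structure ZS (K : Type*) [Monoid K] (G H : Submonoid K) : Prop where
  exGH : ∀ k : K, ∃! p : G × H, (p.1 : K) * (p.2 : K) = k
  exHG : ∀ k : K, ∃! p : H × G, (p.1 : K) * (p.2 : K) = k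

variable {K : Type*} [Monoid K] {G H : Submonoid K}

/-- `h ▷ g`, defined by `h * g = (h ▷ g) * (h ◁ g)`. -/
noncomputable def ZS.rtr (zs : ZS K G H) (h : H) (g : G) : G :=
  ((zs.exGH ((h : K) * (g : K))).choose).1

/-- `h ◁ g`, defined by `h * g = (h ▷ g) * (h ◁ g)`. -/
noncomputable def ZS.rtl (zs : ZS K G H) (h : H) (g : G) : H :=
  ((zs.exGH ((h : K) * (g : K))).choose).2

/-- `g ▶ h`, defined by `g * h = (g ▶ h) * (g ◀ h)`. -/
noncomputable def ZS.ltr (zs : ZS K G H) (g : G) (h : H) : H :=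
  ((zs.exHG ((g : K) * (h : K))).choose).1

/-- `g ◀ h`, defined by `g * h = (g ▶ h) * (g ◀ h)`. -/
noncomputable def ZS.ltl (zs : ZS K G H) (g : G) (h : H) : G :=
  ((zs.exHG ((g : K) * (h : K))).choose).2

/-- Right divisibility: `x` is a suffix of `y`. -/
def RDvd {M : Type*} [Monoid M] (x y : M) : Prop := ∃ u, y = u * x

/-- An atom of a monoid. -/
def MAtom {M : Type*} [Monoid M] (a : M) : Prop :=
  a ≠ 1 ∧ ∀ u v : M, a = u * v → u = 1 ∨ v = 1

/-- An atomic monoid: generated by its atoms, with bounded lengths of atomic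
decompositions. -/
def Atomic (M : Type*) [Monoid M] : Prop :=
  (∀ x : M, ∃ l : List M, (∀ a ∈ l, MAtom a) ∧ l.prod = x) ∧
  ∀ x : M, ∃ N : ℕ, ∀ l : List M, (∀ a ∈ l, MAtom a) → l.prod = x → l.length ≤ N

/-- `m` is the least common upper bound of the set `S` with respect to
left divisibility. -/
def IsDvdLUB {M : Type*} [Monoid M] (S : Set M) (m : M) : Prop :=
  (∀ s ∈ S, s ∣ m) ∧ ∀ n, (∀ s ∈ S, s ∣ n) → m ∣ n

/-- `m` is the least common upper bound of `x` and `y` with respect to left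
divisibility. -/
def IsDvdLCM {M : Type*} [Monoid M] (x y m : M) : Prop :=
  x ∣ m ∧ y ∣ m ∧ ∀ n, x ∣ n → y ∣ n → m ∣ n

/-- `d = Δ_x`, the least common upper bound of `{ y \ x : y ∈ M }`, where
`y * (y \ x) = y ∨ x`. -/
def IsDeltaOf {M : Type*} [Monoid M] (x d : M) : Prop :=
  IsDvdLUB {t : M | ∃ y, IsDvdLCM y x (y * t)} d

/-- A Garside structure on a monoid `M` with Garside element `Δ`. -/
structure GarsideStructure (M : Type*) [Monoid M] (Δ : M) : Prop where
  mul_left_cancel : ∀ a b c : M, a * b = a * c → b = c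
  mul_right_cancel : ∀ a b c : M, b * a = c * a → b = c
  atomic : Atomic M
  meet_left : ∀ x y : M, ∃ d, d ∣ x ∧ d ∣ y ∧ ∀ e, e ∣ x → e ∣ y → e ∣ d
  join_left : ∀ x y : M, ∃ m, x ∣ m ∧ y ∣ m ∧ ∀ n, x ∣ n → y ∣ n → m ∣ n
  meet_right : ∀ x y : M, ∃ d, RDvd d x ∧ RDvd d y ∧ ∀ e, RDvd e x → RDvd e y → RDvd e d
  join_right : ∀ x y : M, ∃ m, RDvd x m ∧ RDvd y m ∧ ∀ n, RDvd x n → RDvd y n → RDvd m n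
  balanced : ∀ x, x ∣ Δ ↔ RDvd x Δ
  div_finite : {x : M | x ∣ Δ}.Finite
  div_gen : Submonoid.closure {x : M | x ∣ Δ} = ⊤

end ZSPaper

open ZSPaper Function

theorem stmt4 {K : Type*} [Monoid K] {G H : Submonoid K} (zs : ZS K G H)
    (hH : ∀ a b : H, a * b = 1 → a = 1 ∧ b = 1) :
    ∀ x y : K, x * y ∈ G → x ∈ G ∧ y ∈ G := by
  intro x y hxy
  obtain ⟨⟨g₁, h₁⟩, hx, _⟩ := zs.exGH x
  obtain ⟨⟨h₂, g₂⟩, hy, _⟩ := zs.exHG y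
  obtain ⟨⟨g₃, h₃⟩, hs, _⟩ := zs.exGH (((h₁ * h₂ : H) : K) * (g₂ : K))
  simp only at hx hy hs
  obtain ⟨p, hp, hpu⟩ := zs.exGH (x * y)
  have e1 : ((g₁ * g₃ : G) : K) * ((h₃ : H) : K) = x * y := by
    rw [← hx, ← hy]
    push_cast
    push_cast at hs
    rw [mul_assoc, hs]
    simp [mul_assoc]
  have e2 : ((⟨x * y, hxy⟩ : G) : K) * ((1 : H) : K) = x * y := by simp
  have u1 := hpu (g₁ * g₃, h₃) e1
  have u2 := hpu (⟨x * y, hxy⟩, (1 : H)) e2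
  have hh3 : h₃ = 1 := congrArg Prod.snd (u1.trans u2.symm)
  obtain ⟨q, hq, hqu⟩ := zs.exHG ((g₃ : K))
  have f1 : ((h₁ * h₂ : H) : K) * (g₂ : K) = (g₃ : K) := by
    rw [← hs, hh3]; simp
  have f2 : ((1 : H) : K) * ((g₃ : G) : K) = (g₃ : K) := by simp
  have v1 := hqu (h₁ * h₂, g₂) f1
  have v2 := hqu ((1 : H), g₃) f2
  have v := v1.trans v2.symm
  have hh12 : h₁ * h₂ = 1 := congrArg Prod.fst v
  obtain ⟨hh1, hh2⟩ := hH h₁ h₂ hh12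
  constructor
  · rw [← hx, hh1]; simpa using g₁.2
  · rw [← hy, hh2]; simpa using g₂.2
end

section
/- Suppose K = G ⋈ H is an internal Zappa–Szép product of monoids and H is conical. If a ∈ G is an atom of G, then for every h ∈ H, the element h ▷ a is an atom of G. -/
open ZSPaper Function

section Aux

variable {K : Type*} [Monoid K] {G H : Submonoid K}

theorem ZS_GH_unique (zs : ZS K G H) {g₁ g₂ : G} {h₁ h₂ : H}
    (h : (g₁ : K) * h₁ = (g₂ : K) * h₂) : g₁ = g₂ ∧ h₁ = h₂ := by
  have u := (zs.exGH ((g₂ : K) * h₂)).choose_spec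
  have e1 := u.2 (g₁, h₁) h
  have e2 := u.2 (g₂, h₂) rfl
  exact Prod.mk.inj (e1.trans e2.symm)

theorem ZS_HG_unique (zs : ZS K G H) {h₁ h₂ : H} {g₁ g₂ : G}
    (h : (h₁ : K) * g₁ = (h₂ : K) * g₂) : h₁ = h₂ ∧ g₁ = g₂ := by
  have u := (zs.exHG ((h₂ : K) * g₂)).choose_spec
  have e1 := u.2 (h₁, g₁) h
  have e2 := u.2 (h₂, g₂) rfl
  exact Prod.mk.inj (e1.trans e2.symm)

theorem ZS_rtr_rtl (zs : ZS K G H) (h : H) (g : G) :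
    (zs.rtr h g : K) * (zs.rtl h g : K) = (h : K) * g :=
  (zs.exGH ((h : K) * g)).choose_spec.1

theorem ZS_ltr_ltl (zs : ZS K G H) (g : G) (h : H) :
    (zs.ltr g h : K) * (zs.ltl g h : K) = (g : K) * h :=
  (zs.exHG ((g : K) * h)).choose_spec.1

theorem ZS_ltl_eq_one (zs : ZS K G H) {g : G} {h : H}
    (h0 : zs.ltl g h = 1) : g = 1 := by
  have e := ZS_ltr_ltl zs g h
  rw [h0] at e
  have : ((1 : G) : K) * (zs.ltr g h : K) = (g : K) * h := by
    simpa using e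
  exact (ZS_GH_unique zs this).1.symm

theorem ZS_ltl_mul (zs : ZS K G H) (u v : G) (h : H) :
    zs.ltl (u * v) h = zs.ltl u (zs.ltr v h) * zs.ltl v h := by
  have e : (zs.ltr (u * v) h : K) * (zs.ltl (u * v) h : K) =
      (zs.ltr u (zs.ltr v h) : K) * ((zs.ltl u (zs.ltr v h) * zs.ltl v h : G) : K) := by
    rw [ZS_ltr_ltl]
    push_cast
    rw [mul_assoc, ← ZS_ltr_ltl zs v h, ← mul_assoc, ← ZS_ltr_ltl zs u (zs.ltr v h),
      mul_assoc]
  exact (ZS_HG_unique zs e).2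

end Aux

theorem stmt5 {K : Type*} [Monoid K] {G H : Submonoid K} (zs : ZS K G H)
    (hH : ∀ a b : H, a * b = 1 → a = 1 ∧ b = 1) :
    ∀ (a : G), MAtom a → ∀ h : H, MAtom (zs.rtr h a) := by
  rintro a ⟨ha1, ha2⟩ h
  constructor
  · intro h0
    have e := ZS_rtr_rtl zs h a
    rw [h0] at e
    have e' : (h : K) * a = (zs.rtl h a : K) * ((1 : G) : K) := by
      simpa using e.symm
    exact ha1 (ZS_HG_unique zs e').2
  · intro u v huv
    have key : zs.ltr (zs.rtr h a) (zs.rtl h a) = h ∧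
        zs.ltl (zs.rtr h a) (zs.rtl h a) = a :=
      ZS_HG_unique zs (by rw [ZS_ltr_ltl, ZS_rtr_rtl])
    have ha : a = zs.ltl u (zs.ltr v (zs.rtl h a)) * zs.ltl v (zs.rtl h a) := by
      conv_lhs => rw [← key.2, huv, ZS_ltl_mul]
    rcases ha2 _ _ ha with h1 | h1
    · exact Or.inl (ZS_ltl_eq_one zs h1)
    · exact Or.inr (ZS_ltl_eq_one zs h1)
end

section
/- Suppose K = G ⋈ H is an internal Zappa–Szép product of monoids, G is left-cancellative, and every pair of elements of G has a common right multiple (for all g₁, g₂ ∈ G there exist ḡ₁, ḡ₂ ∈ G with g₁ḡ₁ = g₂ḡ₂). Then for each h ∈ H, the map g ↦ h ▷ g is injective on G. -/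
open ZSPaper Function

lemma ZSPaper.ZS.rtr_mul_rtl {K : Type*} [Monoid K] {G H : Submonoid K} (zs : ZS K G H)
    (h : H) (g : G) : (zs.rtr h g : K) * (zs.rtl h g : K) = (h : K) * g :=
  (zs.exGH ((h : K) * g)).choose_spec.1

lemma ZSPaper.ZS.gh_unique {K : Type*} [Monoid K] {G H : Submonoid K} (zs : ZS K G H)
    {g g' : G} {h h' : H} (e : (g : K) * h = (g' : K) * h') : g = g' ∧ h = h' := by
  obtain ⟨x, -, hu⟩ := zs.exGH ((g' : K) * h')
  have h1 := hu (g, h) e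
  have h2 := hu (g', h') rfl
  have h3 := h1.trans h2.symm
  exact ⟨congrArg Prod.fst h3, congrArg Prod.snd h3⟩

lemma ZSPaper.ZS.hg_unique {K : Type*} [Monoid K] {G H : Submonoid K} (zs : ZS K G H)
    {g g' : G} {h h' : H} (e : (h : K) * g = (h' : K) * g') : h = h' ∧ g = g' := by
  obtain ⟨x, -, hu⟩ := zs.exHG ((h' : K) * g')
  have h1 := hu (h, g) e
  have h2 := hu (h', g') rfl
  have h3 := h1.trans h2.symm
  exact ⟨congrArg Prod.fst h3, congrArg Prod.snd h3⟩

theorem stmt7 {K : Type*} [Monoid K] {G H : Submonoid K} (zs : ZS K G H)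
    (hGl : ∀ a b c : G, a * b = a * c → b = c)
    (hcm : ∀ g₁ g₂ : G, ∃ g₁' g₂' : G, g₁ * g₁' = g₂ * g₂') :
    ∀ h : H, Function.Injective (zs.rtr h) := by
  intro h g₁ g₂ hgeq
  set p := zs.rtr h g₁ with hp
  set h₁ := zs.rtl h g₁ with hh₁
  set h₂ := zs.rtl h g₂ with hh₂
  have E1 : (p : K) * h₁ = (h : K) * g₁ := zs.rtr_mul_rtl h g₁
  have E2 : (p : K) * h₂ = (h : K) * g₂ := by
    have := zs.rtr_mul_rtl h g₂; rw [← hgeq] at this; exact this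
  obtain ⟨a, b, hab⟩ := hcm g₁ g₂
  set q₁ := zs.rtr h₁ a with hq₁
  set k₁ := zs.rtl h₁ a with hk₁
  set q₂ := zs.rtr h₂ b with hq₂
  set k₂ := zs.rtl h₂ b with hk₂
  have F1 : (q₁ : K) * k₁ = (h₁ : K) * a := zs.rtr_mul_rtl h₁ a
  have F2 : (q₂ : K) * k₂ = (h₂ : K) * b := zs.rtr_mul_rtl h₂ b
  have key : ((p * q₁ : G) : K) * k₁ = ((p * q₂ : G) : K) * k₂ := by
    push_cast
    rw [mul_assoc, F1, mul_assoc, F2, ← mul_assoc, ← mul_assoc, E1, E2,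
      mul_assoc, mul_assoc, ← Submonoid.coe_mul G, ← Submonoid.coe_mul G, hab]
  obtain ⟨hpq, hk⟩ := zs.gh_unique key
  have hq : q₁ = q₂ := hGl p q₁ q₂ hpq
  have hha : (h₁ : K) * a = (h₂ : K) * b := by rw [← F1, ← F2, hq, hk]
  have hh12 : h₁ = h₂ := (zs.hg_unique hha).1
  have : (h : K) * g₁ = (h : K) * g₂ := by rw [← E1, ← E2, hh12]
  exact (zs.hg_unique this).2
end

section
/- Suppose K = G ⋈ H is an internal Zappa–Szép product of monoids, G is atomic, and for every h ∈ H the map a ↦ h ▷ a is surjective on the set of atoms of G. Then for every h ∈ H, the map g ↦ h ▷ g is surjective on all of G. -/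
open ZSPaper Function

namespace ZSPaper
section Aux

variable {K : Type*} [Monoid K] {G H : Submonoid K}

lemma ZS.rtr_spec (zs : ZS K G H) (h : H) (g : G) :
    (zs.rtr h g : K) * (zs.rtl h g : K) = (h : K) * g :=
  (zs.exGH ((h : K) * g)).choose_spec.1

lemma ZS.rtr_unique (zs : ZS K G H) (h : H) (g : G) (g' : G) (h' : H)
    (e : (g' : K) * (h' : K) = (h : K) * g) : zs.rtr h g = g' ∧ zs.rtl h g = h' := by
  have := (zs.exGH ((h : K) * g)).choose_spec.2 (g', h') e
  exact ⟨congrArg Prod.fst this.symm, congrArg Prod.snd this.symm⟩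

lemma ZS.rtr_one (zs : ZS K G H) (h : H) : zs.rtr h 1 = 1 :=
  (zs.rtr_unique h 1 1 h (by simp)).1

lemma ZS.rtr_mul (zs : ZS K G H) (h : H) (a b : G) :
    zs.rtr h (a * b) = zs.rtr h a * zs.rtr (zs.rtl h a) b := by
  refine (zs.rtr_unique h (a * b) (zs.rtr h a * zs.rtr (zs.rtl h a) b)
    (zs.rtl (zs.rtl h a) b) ?_).1
  push_cast
  rw [mul_assoc, zs.rtr_spec (zs.rtl h a) b, ← mul_assoc, zs.rtr_spec h a,
    mul_assoc]

lemma ZS.key (zs : ZS K G H)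
    (hsurj : ∀ (h : H) (a : G), MAtom a → ∃ b : G, MAtom b ∧ zs.rtr h b = a) :
    ∀ (l : List G), (∀ a ∈ l, MAtom a) → ∀ h : H, ∃ g, zs.rtr h g = l.prod := by
  intro l
  induction l with
  | nil => exact fun _ h => ⟨1, by simpa using zs.rtr_one h⟩
  | cons a t ih =>
    intro hl h
    obtain ⟨b, -, hb⟩ := hsurj h a (hl a (List.mem_cons_self (a := a) (l := t)))
    obtain ⟨g', hg'⟩ := ih (fun x hx => hl x (List.mem_cons_of_mem a hx)) (zs.rtl h b)
    exact ⟨b * g', by rw [zs.rtr_mul, hb, hg', List.prod_cons]⟩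

end Aux
end ZSPaper

theorem stmt8 {K : Type*} [Monoid K] {G H : Submonoid K} (zs : ZS K G H)
    (hat : Atomic G)
    (hsurj : ∀ (h : H) (a : G), MAtom a → ∃ b : G, MAtom b ∧ zs.rtr h b = a) :
    ∀ h : H, Function.Surjective (zs.rtr h) := by
  intro h g
  obtain ⟨l, hl, hprod⟩ := hat.1 g
  obtain ⟨g', hg'⟩ := zs.key hsurj l hl h
  exact ⟨g', hg'.trans hprod⟩
end

section
/- Suppose K = G ⋈ H is an internal Zappa–Szép product of monoids such that G and H are left-cancellative and, for every h ∈ H, the map g ↦ h ▷ g is injective on G. Then K is left-cancellative. -/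
open ZSPaper Function

theorem stmt9 {K : Type*} [Monoid K] {G H : Submonoid K} (zs : ZS K G H)
    (hGl : ∀ a b c : G, a * b = a * c → b = c)
    (hHl : ∀ a b c : H, a * b = a * c → b = c)
    (hinj : ∀ h : H, Function.Injective (zs.rtr h)) :
    ∀ x y z : K, x * y = x * z → y = z := by
  have uniq : ∀ (k : K) (p q : G × H), (p.1 : K) * (p.2 : K) = k →
      (q.1 : K) * (q.2 : K) = k → p = q := fun k p q hp hq =>
    ((zs.exGH k).unique hp hq)
  have spec : ∀ (h : H) (g : G), (zs.rtr h g : K) * (zs.rtl h g : K) = (h : K) * g :=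
    fun h g => (zs.exGH ((h : K) * g)).choose_spec.1
  have cancelG : ∀ (g : G) (y z : K), (g : K) * y = (g : K) * z → y = z := by
    intro g y z hyz
    obtain ⟨⟨a, b⟩, hab, -⟩ := zs.exGH y
    obtain ⟨⟨c, d⟩, hcd, -⟩ := zs.exGH z
    have h1 : ((g * a : G) : K) * (b : K) = (g : K) * y := by
      push_cast; rw [mul_assoc, hab]
    have h2 : ((g * c : G) : K) * (d : K) = (g : K) * y := by
      push_cast; rw [mul_assoc, hcd, hyz]
    have heq := uniq _ (⟨g * a, b⟩ : G × H) ⟨g * c, d⟩ h1 h2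
    rw [Prod.ext_iff] at heq
    have hac : a = c := hGl g a c heq.1
    rw [← hab, ← hcd, hac, heq.2]
  have cancelH : ∀ (h : H) (y z : K), (h : K) * y = (h : K) * z → y = z := by
    intro h y z hyz
    obtain ⟨⟨a, b⟩, hab, -⟩ := zs.exGH y
    obtain ⟨⟨c, d⟩, hcd, -⟩ := zs.exGH z
    have h1 : (zs.rtr h a : K) * ((zs.rtl h a * b : H) : K) = (h : K) * y := by
      push_cast
      rw [← mul_assoc, spec h a, mul_assoc, hab]
    have h2 : (zs.rtr h c : K) * ((zs.rtl h c * d : H) : K) = (h : K) * y := by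
      push_cast
      rw [← mul_assoc, spec h c, mul_assoc, hcd, hyz]
    have heq := uniq _ (⟨zs.rtr h a, zs.rtl h a * b⟩ : G × H) ⟨zs.rtr h c, zs.rtl h c * d⟩ h1 h2
    rw [Prod.ext_iff] at heq
    have hac : a = c := hinj h heq.1
    rw [hac] at heq
    have hbd : b = d := hHl (zs.rtl h c) b d heq.2
    rw [← hab, ← hcd, hac, hbd]
  intro x y z hxyz
  obtain ⟨⟨g, h⟩, hgh, -⟩ := zs.exGH x
  refine cancelH h y z (cancelG g _ _ ?_)
  rw [← mul_assoc, ← mul_assoc, hgh, hxyz]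
end

section
/- Suppose K = G ⋈ H is an internal Zappa–Szép product of cancellative monoids G and H that act on each other by bijections. Then for every h ∈ H, the bijection g ↦ h ▷ g is an isomorphism of the poset (G, ≼_G) of left-divisibility: g₁ ≼ g₂ if and only if h ▷ g₁ ≼ h ▷ g₂. -/
open ZSPaper Function

theorem stmt12 {K : Type*} [Monoid K] {G H : Submonoid K} (zs : ZS K G H)
    (hGl : ∀ a b c : G, a * b = a * c → b = c)
    (hGr : ∀ a b c : G, b * a = c * a → b = c)
    (hHl : ∀ a b c : H, a * b = a * c → b = c)
    (hHr : ∀ a b c : H, b * a = c * a → b = c)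
    (hb₁ : ∀ h : H, Function.Bijective (zs.rtr h))
    (hb₂ : ∀ h : H, Function.Bijective (fun g : G => zs.ltl g h))
    (hb₃ : ∀ g : G, Function.Bijective (fun h : H => zs.rtl h g))
    (hb₄ : ∀ g : G, Function.Bijective (zs.ltr g)) :
    ∀ (h : H) (g₁ g₂ : G), g₁ ∣ g₂ ↔ zs.rtr h g₁ ∣ zs.rtr h g₂ := by
  have spec : ∀ (h : H) (g : G), ((zs.rtr h g : K)) * (zs.rtl h g : K) = (h : K) * (g : K) :=
    fun h g => (zs.exGH _).choose_spec.1
  have uniq : ∀ (h : H) (g : G) (a : G) (b : H), (a : K) * (b : K) = (h : K) * (g : K) →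
      a = zs.rtr h g ∧ b = zs.rtl h g := by
    intro h g a b hab
    have := (zs.exGH ((h : K) * (g : K))).choose_spec.2 (a, b) hab
    exact ⟨congrArg Prod.fst this, congrArg Prod.snd this⟩
  have rtr_mul : ∀ (h : H) (g₁ g₂ : G),
      zs.rtr h (g₁ * g₂) = zs.rtr h g₁ * zs.rtr (zs.rtl h g₁) g₂ := by
    intro h g₁ g₂
    refine ((uniq h (g₁ * g₂) (zs.rtr h g₁ * zs.rtr (zs.rtl h g₁) g₂)
      (zs.rtl (zs.rtl h g₁) g₂)) ?_).1.symm
    push_cast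
    rw [mul_assoc, spec, ← mul_assoc, spec, mul_assoc]
  intro h g₁ g₂
  constructor
  · rintro ⟨u, rfl⟩
    exact ⟨_, rtr_mul h g₁ u⟩
  · rintro ⟨v, hv⟩
    obtain ⟨u, hu⟩ := (hb₁ (zs.rtl h g₁)).2 v
    refine ⟨u, (hb₁ h).1 ?_⟩
    rw [rtr_mul, hu, ← hv]
end

section
/- Suppose K = G ⋈ H is an internal Zappa–Szép product where G and H are cancellative and conical monoids acting on each other by bijections. Then for all g ∈ G and h ∈ H, the element gh' = hg', where h' = g⁻¹ ▶ h and g' = h⁻¹ ▷ g, is the least common upper bound g ∨ h of g and h with respect to left-divisibility in K. Moreover, if g₁ ∨ h₁ = g₂ ∨ h₂ with gᵢ ∈ G, hᵢ ∈ H, then g₁ = g₂ and h₁ = h₂. -/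
open Function ZSPaper


section Aux

variable {K : Type*} [Monoid K] {G H : Submonoid K}

/-- Defining property of `▷` and `◁`. -/
theorem ZSPaper.ZS.rtr_rtl_spec (zs : ZS K G H) (h : H) (g : G) :
    ((zs.rtr h g : K)) * ((zs.rtl h g : K)) = (h : K) * g :=
  (zs.exGH ((h : K) * g)).choose_spec.1

/-- Defining property of `▶` and `◀`. -/
theorem ZSPaper.ZS.ltr_ltl_spec (zs : ZS K G H) (g : G) (h : H) :
    ((zs.ltr g h : K)) * ((zs.ltl g h : K)) = (g : K) * h :=
  (zs.exHG ((g : K) * h)).choose_spec.1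

/-- Uniqueness of GH-decompositions. -/
theorem ZSPaper.ZS.gh_unique_s14 (zs : ZS K G H) {g₁ g₂ : G} {h₁ h₂ : H}
    (e : (g₁ : K) * (h₁ : K) = (g₂ : K) * (h₂ : K)) : g₁ = g₂ ∧ h₁ = h₂ := by
  have := (zs.exGH ((g₂ : K) * (h₂ : K))).unique (y₁ := (g₁, h₁)) (y₂ := (g₂, h₂)) e rfl
  exact ⟨congrArg Prod.fst this, congrArg Prod.snd this⟩

/-- Uniqueness of HG-decompositions. -/
theorem ZSPaper.ZS.hg_unique_s14 (zs : ZS K G H) {h₁ h₂ : H} {g₁ g₂ : G}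
    (e : (h₁ : K) * (g₁ : K) = (h₂ : K) * (g₂ : K)) : h₁ = h₂ ∧ g₁ = g₂ := by
  have := (zs.exHG ((h₂ : K) * (g₂ : K))).unique (y₁ := (h₁, g₁)) (y₂ := (h₂, g₂)) e rfl
  exact ⟨congrArg Prod.fst this, congrArg Prod.snd this⟩

/-- Characterisation of `▷`, `◁`. -/
theorem ZSPaper.ZS.rtr_rtl_eq (zs : ZS K G H) {h h' : H} {g g' : G}
    (e : (h : K) * g = (g' : K) * (h' : K)) : zs.rtr h g = g' ∧ zs.rtl h g = h' :=
  zs.gh_unique_s14 ((zs.rtr_rtl_spec h g).trans e)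

/-- Characterisation of `▶`, `◀`. -/
theorem ZSPaper.ZS.ltr_ltl_eq (zs : ZS K G H) {h h' : H} {g g' : G}
    (e : (g : K) * h = (h' : K) * (g' : K)) : zs.ltr g h = h' ∧ zs.ltl g h = g' :=
  zs.hg_unique_s14 ((zs.ltr_ltl_spec g h).trans e)

/-- `g ▶ (x * y) = (g ▶ x) * ((g ◀ x) ▶ y)`. -/
theorem ZSPaper.ZS.ltr_mul (zs : ZS K G H) (g : G) (x y : H) :
    zs.ltr g (x * y) = zs.ltr g x * zs.ltr (zs.ltl g x) y := by
  have e : (g : K) * ((x * y : H) : K)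
      = ((zs.ltr g x * zs.ltr (zs.ltl g x) y : H) : K)
        * ((zs.ltl (zs.ltl g x) y : G) : K) := by
    push_cast
    rw [← mul_assoc, ← zs.ltr_ltl_spec g x, mul_assoc, ← zs.ltr_ltl_spec (zs.ltl g x) y, ← mul_assoc]
  exact (zs.ltr_ltl_eq e).1

end Aux

open ZSPaper Function

theorem stmt14 {K : Type*} [Monoid K] {G H : Submonoid K} (zs : ZS K G H)
    (hGl : ∀ a b c : G, a * b = a * c → b = c)
    (hGr : ∀ a b c : G, b * a = c * a → b = c)
    (hHl : ∀ a b c : H, a * b = a * c → b = c)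
    (hHr : ∀ a b c : H, b * a = c * a → b = c)
    (hGcon : ∀ a b : G, a * b = 1 → a = 1 ∧ b = 1)
    (hHcon : ∀ a b : H, a * b = 1 → a = 1 ∧ b = 1)
    (hb₁ : ∀ h : H, Function.Bijective (zs.rtr h))
    (hb₂ : ∀ h : H, Function.Bijective (fun g : G => zs.ltl g h))
    (hb₃ : ∀ g : G, Function.Bijective (fun h : H => zs.rtl h g))
    (hb₄ : ∀ g : G, Function.Bijective (zs.ltr g)) :
    (∀ (g : G) (h : H),
      (g : K) * ((invFun (zs.ltr g) h : H) : K) = (h : K) * ((invFun (zs.rtr h) g : G) : K) ∧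
      IsDvdLCM (g : K) (h : K) ((g : K) * ((invFun (zs.ltr g) h : H) : K))) ∧
    (∀ (g₁ g₂ : G) (h₁ h₂ : H),
      (g₁ : K) * ((invFun (zs.ltr g₁) h₁ : H) : K) = (g₂ : K) * ((invFun (zs.ltr g₂) h₂ : H) : K) →
        g₁ = g₂ ∧ h₁ = h₂) := by
  have ltr_inv : ∀ (g : G) (h : H), zs.ltr g (invFun (zs.ltr g) h) = h :=
    fun g h => Function.rightInverse_invFun (hb₄ g).surjective h
  have rtr_inv : ∀ (h : H) (g : G), zs.rtr h (invFun (zs.rtr h) g) = g :=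
    fun h g => Function.rightInverse_invFun (hb₁ h).surjective g
  constructor
  · intro g h
    set h' : H := invFun (zs.ltr g) h with hh'
    set g' : G := invFun (zs.rtr h) g with hg'
    have hup : zs.ltr g h' = h := by rw [hh']; exact ltr_inv g h
    have hup' : zs.rtr h g' = g := by rw [hg']; exact rtr_inv h g
    have hgh' : (g : K) * (h' : K) = (h : K) * ((zs.ltl g h' : G) : K) := by
      rw [← zs.ltr_ltl_spec g h', hup]
    have key := zs.rtr_rtl_eq hgh'.symm
    have hgg : zs.ltl g h' = g' := (hb₁ h).injective (by rw [key.1, hup'])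
    have heq : (g : K) * (h' : K) = (h : K) * (g' : K) := by rw [hgh', hgg]
    refine ⟨heq, ⟨(h' : K), rfl⟩, ⟨(g' : K), heq⟩, ?_⟩
    rintro n ⟨a, ha⟩ ⟨b, hb⟩
    obtain ⟨⟨g₁, h₁⟩, ha1, -⟩ := zs.exGH a
    obtain ⟨⟨h₂, g₂⟩, hb1, -⟩ := zs.exHG b
    simp only at ha1 hb1
    set t : H := zs.ltr g₁ h₁ with ht
    have hn1 : n = ((zs.ltr g t : H) : K) * ((zs.ltl g t * zs.ltl g₁ h₁ : G) : K) := by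
      push_cast
      rw [ha, ← ha1, ← zs.ltr_ltl_spec g₁ h₁, ← ht, ← mul_assoc, ← zs.ltr_ltl_spec g t,
        mul_assoc]
    have hn2 : n = ((h * h₂ : H) : K) * ((g₂ : G) : K) := by
      push_cast
      rw [hb, ← hb1, ← mul_assoc]
    have hHG : h * h₂ = zs.ltr g t := (zs.hg_unique_s14 (hn2.symm.trans hn1)).1
    obtain ⟨s', hs'⟩ := (hb₄ (zs.ltl g h')).surjective h₂
    have hts : t = h' * s' := by
      apply (hb₄ g).injective
      rw [zs.ltr_mul, hup, hs']
      exact hHG.symm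
    have htsc : (t : K) = (h' : K) * (s' : K) := by rw [hts]; push_cast; rfl
    refine ⟨(s' : K) * ((zs.ltl g₁ h₁ : G) : K), ?_⟩
    calc n = (g : K) * ((g₁ : K) * (h₁ : K)) := by rw [ha, ha1]
      _ = (g : K) * ((t : K) * ((zs.ltl g₁ h₁ : G) : K)) := by
          rw [ht, zs.ltr_ltl_spec g₁ h₁]
      _ = (g : K) * (h' : K) * ((s' : K) * ((zs.ltl g₁ h₁ : G) : K)) := by
          rw [htsc]; rw [mul_assoc, mul_assoc]
  · intro g₁ g₂ h₁ h₂ e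
    obtain ⟨eg, eh⟩ := zs.gh_unique_s14 e
    subst eg
    refine ⟨rfl, ?_⟩
    rw [← ltr_inv g₁ h₁, eh, ltr_inv]
end

section
/- If K = G ⋈ H is an internal Zappa–Szép product of monoids and K is a Garside monoid, then G and H are parabolic submonoids of K; in particular, G and H are Garside monoids, and if Δ = d_G d_H is the GH-decomposition of a Garside element Δ of K, then d_G is a balanced element with Div(d_G) = 𝒟 ∩ G, which is a Garside element of G (and similarly for H). -/
namespace ZSPaper

variable {K : Type*} [Monoid K] {G H : Submonoid K}

/-- Swap the two factors of a Zappa–Szép product. -/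
lemma ZS.swap (zs : ZS K G H) : ZS K H G := ⟨zs.exHG, zs.exGH⟩

lemma ghEq (zs : ZS K G H) {g₁ g₂ : G} {h₁ h₂ : H}
    (e : (g₁ : K) * (h₁ : K) = (g₂ : K) * (h₂ : K)) : (g₁ : K) = g₂ ∧ (h₁ : K) = h₂ := by
  obtain ⟨p, -, hu⟩ := zs.exGH ((g₂ : K) * (h₂ : K))
  have e1 : (⟨g₁, h₁⟩ : G × H) = p := hu _ e
  have e2 : (⟨g₂, h₂⟩ : G × H) = p := hu _ rfl
  have h := e1.trans e2.symm
  exact ⟨congrArg (fun q : G × H => (q.1 : K)) h, congrArg (fun q : G × H => (q.2 : K)) h⟩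

lemma hgEq (zs : ZS K G H) {h₁ h₂ : H} {g₁ g₂ : G}
    (e : (h₁ : K) * (g₁ : K) = (h₂ : K) * (g₂ : K)) : (h₁ : K) = h₂ ∧ (g₁ : K) = g₂ := by
  obtain ⟨p, -, hu⟩ := zs.exHG ((h₂ : K) * (g₂ : K))
  have e1 : (⟨h₁, g₁⟩ : H × G) = p := hu _ e
  have e2 : (⟨h₂, g₂⟩ : H × G) = p := hu _ rfl
  have h := e1.trans e2.symm
  exact ⟨congrArg (fun q : H × G => (q.1 : K)) h, congrArg (fun q : H × G => (q.2 : K)) h⟩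

lemma pow_list {M : Type*} [Monoid M] {b : M} {lb : List M}
    (hat : ∀ a ∈ lb, MAtom a) (hp : lb.prod = b) :
    ∀ n : ℕ, ∃ l : List M, (∀ a ∈ l, MAtom a) ∧ l.prod = b ^ n ∧ l.length = n * lb.length := by
  intro n
  induction n with
  | zero => exact ⟨[], by simp, by simp, by simp⟩
  | succ n ih =>
    obtain ⟨l, h1, h2, h3⟩ := ih
    refine ⟨lb ++ l, ?_, ?_, ?_⟩
    · intro a ha
      rcases List.mem_append.1 ha with h | h
      exacts [hat a h, h1 a h]
    · rw [List.prod_append, hp, h2, pow_succ']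
    · simp [h3]; ring

lemma sandwich {M : Type*} [Monoid M] (hA : Atomic M) {a b c : M}
    (h : a = b * a * c) : b = 1 ∧ c = 1 := by
  obtain ⟨hex, hbd⟩ := hA
  obtain ⟨lb, hlb, hpb⟩ := hex b
  obtain ⟨la, hla, hpa⟩ := hex a
  obtain ⟨lc, hlc, hpc⟩ := hex c
  obtain ⟨N, hN⟩ := hbd a
  have key : ∀ n : ℕ, a = b ^ n * a * c ^ n := by
    intro n
    induction n with
    | zero => simp
    | succ n ih =>
      calc a = b * a * c := h
        _ = b * (b ^ n * a * c ^ n) * c := by rw [← ih]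
        _ = b ^ (n + 1) * a * c ^ (n + 1) := by
            rw [pow_succ' b n, pow_succ c n]
            simp only [mul_assoc]
  have hlen : ∀ n : ℕ, n * lb.length + (la.length + n * lc.length) ≤ N := by
    intro n
    obtain ⟨l1, a1, p1, e1⟩ := pow_list hlb hpb n
    obtain ⟨l2, a2, p2, e2⟩ := pow_list hlc hpc n
    have hh := hN (l1 ++ la ++ l2) ?_ ?_
    · simpa [e1, e2] using hh
    · intro x hx
      rcases List.mem_append.1 hx with hx | hx
      · rcases List.mem_append.1 hx with hx | hx
        exacts [a1 x hx, hla x hx]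
      · exact a2 x hx
    · rw [List.prod_append, List.prod_append, p1, hpa, p2]
      exact (key n).symm
  have hb0 : lb = [] := by
    rw [← List.length_eq_zero_iff]
    by_contra hpos
    have h1 := hlen (N + 1)
    have : N + 1 ≤ (N + 1) * lb.length := Nat.le_mul_of_pos_right _ (Nat.pos_of_ne_zero hpos)
    omega
  have hc0 : lc = [] := by
    rw [← List.length_eq_zero_iff]
    by_contra hpos
    have h1 := hlen (N + 1)
    have : N + 1 ≤ (N + 1) * lc.length := Nat.le_mul_of_pos_right _ (Nat.pos_of_ne_zero hpos)
    omega
  constructor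
  · rw [← hpb, hb0, List.prod_nil]
  · rw [← hpc, hc0, List.prod_nil]

lemma noUnits {M : Type*} [Monoid M] (hA : Atomic M) {x y : M} (h : x * y = 1) :
    x = 1 ∧ y = 1 :=
  sandwich hA (a := (1 : M)) (by rw [mul_one, h])

lemma factG (zs : ZS K G H) (hA : Atomic K) {x y : K} (hxy : x * y ∈ G) :
    x ∈ G ∧ y ∈ G := by
  obtain ⟨⟨g₁, h₁⟩, hx, -⟩ := zs.exGH x
  obtain ⟨⟨h₂, g₂⟩, hy, -⟩ := zs.exHG y
  obtain ⟨⟨g₃, h₃⟩, h3, -⟩ := zs.exGH ((h₁ : K) * ((h₂ : K) * (g₂ : K)))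
  simp only at hx hy h3
  have e : ((g₁ * g₃ : G) : K) * (h₃ : K) = ((⟨x * y, hxy⟩ : G) : K) * ((1 : H) : K) := by
    push_cast
    rw [mul_one, mul_assoc, h3, ← mul_assoc, hx, hy]
  obtain ⟨-, eh⟩ := ghEq zs e
  simp only [OneMemClass.coe_one] at eh
  have e2 : ((h₁ * h₂ : H) : K) * (g₂ : K) = ((1 : H) : K) * (g₃ : K) := by
    push_cast
    rw [one_mul, mul_assoc, ← h3, eh, mul_one]
  obtain ⟨eh2, eg2⟩ := hgEq zs e2
  simp only [OneMemClass.coe_one] at eh2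
  push_cast at eh2
  obtain ⟨e1, e2'⟩ := noUnits hA eh2
  constructor
  · have : x = (g₁ : K) := by rw [← hx, e1, mul_one]
    rw [this]; exact g₁.2
  · have : y = (g₂ : K) := by rw [← hy, e2', one_mul]
    rw [this]; exact g₂.2

lemma dvdIffG (zs : ZS K G H) (hA : Atomic K) (x y : G) :
    x ∣ y ↔ (x : K) ∣ (y : K) := by
  constructor
  · rintro ⟨c, rfl⟩
    exact ⟨c, by push_cast; rfl⟩
  · rintro ⟨c, hc⟩
    have hcG : c ∈ G := (factG zs hA (x := (x : K)) (y := c) (by rw [← hc]; exact y.2)).2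
    exact ⟨⟨c, hcG⟩, Subtype.ext hc⟩

lemma rdvdIffG (zs : ZS K G H) (hA : Atomic K) (x y : G) :
    RDvd x y ↔ RDvd (x : K) (y : K) := by
  constructor
  · rintro ⟨c, rfl⟩
    exact ⟨c, by push_cast; rfl⟩
  · rintro ⟨c, hc⟩
    have hcG : c ∈ G := (factG zs hA (x := c) (y := (x : K)) (by rw [← hc]; exact y.2)).1
    exact ⟨⟨c, hcG⟩, Subtype.ext hc⟩

lemma liftList (zs : ZS K G H) (hA : Atomic K) :
    ∀ l : List K, l.prod ∈ G → ∃ l' : List G, l'.map Subtype.val = l := by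
  intro l
  induction l with
  | nil => exact fun _ => ⟨[], rfl⟩
  | cons a t ih =>
    intro h
    rw [List.prod_cons] at h
    obtain ⟨ha, ht⟩ := factG zs hA h
    obtain ⟨t', ht'⟩ := ih ht
    exact ⟨⟨a, ha⟩ :: t', by simp [ht']⟩

lemma coeListProd (l : List G) : ((l.prod : G) : K) = (l.map Subtype.val).prod := by
  simp [map_list_prod G.subtype l]

end ZSPaper

namespace ZSPaper

variable {K : Type*} [Monoid K] {G H : Submonoid K}

lemma myAnti {Δ : K} (gs : GarsideStructure K Δ) :
    ∀ a b : K, a ∣ b → b ∣ a → a = b := by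
  rintro a b ⟨u, rfl⟩ ⟨v, hv⟩
  have h1 : u * v = 1 := gs.mul_left_cancel a (u * v) 1 (by rw [← mul_assoc, ← hv, mul_one])
  rw [(noUnits gs.atomic h1).1, mul_one]

lemma myAntiR {Δ : K} (gs : GarsideStructure K Δ) :
    ∀ a b : K, RDvd a b → RDvd b a → a = b := by
  rintro a b ⟨u, rfl⟩ ⟨v, hv⟩
  have h1 : v * u = 1 := gs.mul_right_cancel a (v * u) 1 (by rw [mul_assoc, ← hv, one_mul])
  rw [(noUnits gs.atomic h1).2, one_mul]

lemma mainAux (zs : ZS K G H) {Δ : K} (gs : GarsideStructure K Δ) (dG : G)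
    (hd : ∀ x : K, x ∣ (dG : K) ↔ (x ∣ Δ ∧ x ∈ G))
    (hr : ∀ x : K, RDvd x (dG : K) ↔ (x ∣ Δ ∧ x ∈ G)) :
    GarsideStructure G dG := by
  have hA := gs.atomic
  refine ⟨?_, ?_, ?_, ?_, ?_, ?_, ?_, ?_, ?_, ?_⟩
  · -- mul_left_cancel
    intro a b c h
    exact Subtype.ext (gs.mul_left_cancel a b c (congrArg Subtype.val h))
  · -- mul_right_cancel
    intro a b c h
    exact Subtype.ext (gs.mul_right_cancel a b c (congrArg Subtype.val h))
  · -- atomic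
    constructor
    · intro x
      obtain ⟨l, hl, hp⟩ := hA.1 (x : K)
      obtain ⟨l', hl'⟩ := liftList zs hA l (by rw [hp]; exact x.2)
      refine ⟨l', fun a ha => ?_, ?_⟩
      · have hmem : (a : K) ∈ l := by rw [← hl']; exact List.mem_map_of_mem ha
        have hKa := hl _ hmem
        refine ⟨fun h1 => hKa.1 (by rw [h1]; rfl), fun u v huv => ?_⟩
        rcases hKa.2 (u : K) (v : K) (by rw [huv]; rfl) with h | h
        · exact Or.inl (Subtype.ext h)
        · exact Or.inr (Subtype.ext h)
      · exact Subtype.ext (by rw [coeListProd, hl', hp])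
    · intro x
      obtain ⟨N, hN⟩ := hA.2 (x : K)
      refine ⟨N, fun l hl hp => ?_⟩
      have hh := hN (l.map Subtype.val) ?_ ?_
      · simpa using hh
      · intro a ha
        obtain ⟨b, hb, rfl⟩ := List.mem_map.1 ha
        have hKb := hl b hb
        refine ⟨fun h1 => hKb.1 (Subtype.ext h1), fun u v huv => ?_⟩
        have hu : u ∈ G ∧ v ∈ G := factG zs hA (by rw [← huv]; exact b.2)
        rcases hKb.2 ⟨u, hu.1⟩ ⟨v, hu.2⟩ (Subtype.ext huv) with h | h
        · exact Or.inl (congrArg Subtype.val h)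
        · exact Or.inr (congrArg Subtype.val h)
      · rw [← coeListProd, hp]
  · -- meet_left
    intro x y
    obtain ⟨d, hdx, hdy, hmin⟩ := gs.meet_left (x : K) (y : K)
    have hdG : d ∈ G := by
      obtain ⟨u, hu⟩ := hdx
      exact (factG zs hA (by rw [← hu]; exact x.2)).1
    refine ⟨⟨d, hdG⟩, (dvdIffG zs hA _ _).2 hdx, (dvdIffG zs hA _ _).2 hdy, fun e hex hey => ?_⟩
    exact (dvdIffG zs hA _ _).2 (hmin _ ((dvdIffG zs hA _ _).1 hex) ((dvdIffG zs hA _ _).1 hey))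
  · -- join_left
    intro x y
    obtain ⟨m, hxm, hym, hmin⟩ := gs.join_left (x : K) (y : K)
    obtain ⟨⟨gm, hm⟩, hgm, -⟩ := zs.exGH m
    simp only at hgm
    have claim : ∀ z : K, z ∈ G → z ∣ m → z ∣ (gm : K) := by
      intro z hz hzm
      obtain ⟨u, hu⟩ := hzm
      obtain ⟨⟨gu, hu'⟩, hgu, -⟩ := zs.exGH u
      simp only at hgu
      have e : ((⟨z, hz⟩ * gu : G) : K) * (hu' : K) = (gm : K) * (hm : K) := by
        push_cast
        rw [hgm, mul_assoc, hgu]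
        exact hu.symm
      obtain ⟨e1, -⟩ := ghEq zs e
      refine ⟨(gu : K), ?_⟩
      rw [← e1]; push_cast; rfl
    have h4 : m = (gm : K) :=
      myAnti gs m _ (hmin _ (claim x x.2 hxm) (claim y y.2 hym)) ⟨(hm : K), hgm.symm⟩
    have hmG : m ∈ G := h4 ▸ gm.2
    refine ⟨⟨m, hmG⟩, (dvdIffG zs hA _ _).2 hxm, (dvdIffG zs hA _ _).2 hym, fun n hxn hyn => ?_⟩
    exact (dvdIffG zs hA _ _).2 (hmin _ ((dvdIffG zs hA _ _).1 hxn) ((dvdIffG zs hA _ _).1 hyn))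
  · -- meet_right
    intro x y
    obtain ⟨d, hdx, hdy, hmin⟩ := gs.meet_right (x : K) (y : K)
    have hdG : d ∈ G := by
      obtain ⟨u, hu⟩ := hdx
      exact (factG zs hA (by rw [← hu]; exact x.2)).2
    refine ⟨⟨d, hdG⟩, (rdvdIffG zs hA _ _).2 hdx, (rdvdIffG zs hA _ _).2 hdy, fun e hex hey => ?_⟩
    exact (rdvdIffG zs hA _ _).2 (hmin _ ((rdvdIffG zs hA _ _).1 hex) ((rdvdIffG zs hA _ _).1 hey))
  · -- join_right
    intro x y
    obtain ⟨m, hxm, hym, hmin⟩ := gs.join_right (x : K) (y : K)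
    obtain ⟨⟨hm, gm⟩, hgm, -⟩ := zs.exHG m
    simp only at hgm
    have claim : ∀ z : K, z ∈ G → RDvd z m → RDvd z (gm : K) := by
      intro z hz hzm
      obtain ⟨u, hu⟩ := hzm
      obtain ⟨⟨hu', gu⟩, hgu, -⟩ := zs.exHG u
      simp only at hgu
      have e : (hu' : K) * ((gu * ⟨z, hz⟩ : G) : K) = (hm : K) * (gm : K) := by
        push_cast
        rw [hgm, ← mul_assoc, hgu]
        exact hu.symm
      obtain ⟨-, e2⟩ := hgEq zs e
      refine ⟨(gu : K), ?_⟩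
      rw [← e2]; push_cast; rfl
    have h4 : m = (gm : K) :=
      myAntiR gs m _ (hmin _ (claim x x.2 hxm) (claim y y.2 hym)) ⟨(hm : K), hgm.symm⟩
    have hmG : m ∈ G := h4 ▸ gm.2
    refine ⟨⟨m, hmG⟩, (rdvdIffG zs hA _ _).2 hxm, (rdvdIffG zs hA _ _).2 hym, fun n hxn hyn => ?_⟩
    exact (rdvdIffG zs hA _ _).2 (hmin _ ((rdvdIffG zs hA _ _).1 hxn) ((rdvdIffG zs hA _ _).1 hyn))
  · -- balanced
    intro x
    exact ((dvdIffG zs hA x dG).trans ((hd (x : K)).trans ((hr (x : K)).symm))).trans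
      (rdvdIffG zs hA x dG).symm
  · -- div_finite
    have hsub : {x : G | x ∣ dG} ⊆ Subtype.val ⁻¹' {x : K | x ∣ Δ} :=
      fun x hx => ((hd (x : K)).1 ((dvdIffG zs hA x dG).1 hx)).1
    exact Set.Finite.subset (Set.Finite.preimage Subtype.val_injective.injOn gs.div_finite) hsub
  · -- div_gen
    rw [Submonoid.eq_top_iff']
    intro g
    have hg : (g : K) ∈ Submonoid.closure {x : K | x ∣ Δ} := by
      rw [gs.div_gen]; trivial
    obtain ⟨l, hl, hp⟩ := Submonoid.exists_list_of_mem_closure hg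
    obtain ⟨l', hl'⟩ := liftList zs hA l (by rw [hp]; exact g.2)
    have hprod : l'.prod = g := Subtype.ext (by rw [coeListProd, hl', hp])
    rw [← hprod]
    refine Submonoid.list_prod_mem _ fun a ha => Submonoid.subset_closure ?_
    have hak : (a : K) ∈ l := by rw [← hl']; exact List.mem_map_of_mem ha
    exact (dvdIffG zs hA a dG).2 ((hd (a : K)).2 ⟨hl _ hak, a.2⟩)

lemma kFacts (zs : ZS K G H) {Δ : K} (gs : GarsideStructure K Δ) (dG : G) (dH : H)
    (hΔ : (dG : K) * (dH : K) = Δ) :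
    (∀ x : K, x ∣ (dG : K) ↔ (x ∣ Δ ∧ x ∈ G)) ∧
    (∀ x : K, RDvd x (dG : K) ↔ (x ∣ Δ ∧ x ∈ G)) ∧
    (∃ e : H, (e : K) * (dG : K) = Δ) := by
  obtain ⟨⟨dH', dG'⟩, hΔ', -⟩ := zs.exHG Δ
  simp only at hΔ'
  have L1 : ∀ x : K, x ∣ Δ → x ∈ G → x ∣ (dG : K) := by
    rintro x ⟨u, hu⟩ hx
    obtain ⟨⟨gu, hu'⟩, hgu, -⟩ := zs.exGH u
    simp only at hgu
    have e : ((⟨x, hx⟩ * gu : G) : K) * (hu' : K) = (dG : K) * (dH : K) := by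
      push_cast
      rw [hΔ, mul_assoc, hgu]
      exact hu.symm
    obtain ⟨e1, -⟩ := ghEq zs e
    refine ⟨(gu : K), ?_⟩
    rw [← e1]; push_cast; rfl
  have L2 : ∀ x : K, x ∣ (dG : K) → x ∣ Δ ∧ x ∈ G := by
    rintro x ⟨u, hu⟩
    have hx : x ∈ G := (factG zs gs.atomic (by rw [← hu]; exact dG.2)).1
    exact ⟨⟨u * (dH : K), by rw [← hΔ, hu, mul_assoc]⟩, hx⟩
  have L3 : ∀ x : K, x ∣ Δ → x ∈ G → RDvd x (dG' : K) := by
    intro x hxd hx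
    obtain ⟨u, hu⟩ := (gs.balanced x).1 hxd
    obtain ⟨⟨hu', gu⟩, hgu, -⟩ := zs.exHG u
    simp only at hgu
    have e : (hu' : K) * ((gu * ⟨x, hx⟩ : G) : K) = (dH' : K) * (dG' : K) := by
      push_cast
      rw [hΔ', ← mul_assoc, hgu]
      exact hu.symm
    obtain ⟨-, e2⟩ := hgEq zs e
    refine ⟨(gu : K), ?_⟩
    rw [← e2]; push_cast; rfl
  have L4 : ∀ x : K, RDvd x (dG' : K) → x ∣ Δ ∧ x ∈ G := by
    rintro x ⟨u, hu⟩
    have hx : x ∈ G := (factG zs gs.atomic (by rw [← hu]; exact dG'.2)).2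
    have hrd : RDvd x Δ := ⟨(dH' : K) * u, by rw [← hΔ', hu, mul_assoc]⟩
    exact ⟨(gs.balanced x).2 hrd, hx⟩
  have L5 : (dG : K) = (dG' : K) := by
    obtain ⟨v, hv⟩ := L3 (dG : K) ⟨(dH : K), hΔ.symm⟩ dG.2
    obtain ⟨w, hw⟩ := L1 (dG' : K) (L4 (dG' : K) ⟨1, (one_mul _).symm⟩).1 dG'.2
    have hs : (dG' : K) = v * (dG' : K) * w := by
      rw [mul_assoc, ← hw]; exact hv
    obtain ⟨hv1, -⟩ := sandwich gs.atomic hs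
    rw [hv, hv1, one_mul]
  refine ⟨fun x => ⟨L2 x, fun h => L1 x h.1 h.2⟩,
          fun x => ⟨fun h => L4 x (L5 ▸ h), fun h => L5 ▸ L3 x h.1 h.2⟩,
          ⟨dH', by rw [L5]; exact hΔ'⟩⟩

end ZSPaper

open ZSPaper Function

theorem stmt16 {K : Type*} [Monoid K] {G H : Submonoid K} (zs : ZS K G H)
    (Δ : K) (gs : GarsideStructure K Δ) :
    ∀ (dG : G) (dH : H), (dG : K) * (dH : K) = Δ →
      ((∀ x : K, x ∣ (dG : K) ↔ RDvd x (dG : K)) ∧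
       (∀ x : K, x ∣ (dG : K) ↔ (x ∣ Δ ∧ x ∈ G)) ∧
       GarsideStructure G dG) ∧
      ((∀ x : K, x ∣ (dH : K) ↔ RDvd x (dH : K)) ∧
       (∀ x : K, x ∣ (dH : K) ↔ (x ∣ Δ ∧ x ∈ H)) ∧
       GarsideStructure H dH) := by
  intro dG dH hΔ
  obtain ⟨hdG, hrG, e, he⟩ := kFacts zs gs dG dH hΔ
  obtain ⟨hdH', hrH', f, hf⟩ := kFacts zs.swap gs e dG he
  have hEH : (e : K) = (dH : K) := (ghEq zs (hf.trans hΔ.symm)).2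
  simp only [hEH] at hdH' hrH'
  exact ⟨⟨fun x => (hdG x).trans (hrG x).symm, hdG, mainAux zs gs dG hdG hrG⟩,
         ⟨fun x => (hdH' x).trans (hrH' x).symm, hdH', mainAux zs.swap gs dH hdH' hrH'⟩⟩
end

section
/- If K = G ⋈ H is an internal Zappa–Szép product of monoids and K is a Garside monoid, then the submonoids act on each other by bijections: for all h ∈ H the maps g ↦ h ▷ g and g ↦ g ◀ h are bijections of G, and for all g ∈ G the maps h ↦ h ◁ g and h ↦ g ▶ h are bijections of H. -/
open ZSPaper Function
namespace ZSPaper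

variable {K : Type*} [Monoid K] {G H : Submonoid K}

lemma ZS.rtr_mul_rtl_s17 (zs : ZS K G H) (h : H) (g : G) :
    (zs.rtr h g : K) * (zs.rtl h g : K) = (h : K) * (g : K) :=
  (zs.exGH _).choose_spec.1

lemma ZS.ltr_mul_ltl (zs : ZS K G H) (g : G) (h : H) :
    (zs.ltr g h : K) * (zs.ltl g h : K) = (g : K) * (h : K) :=
  (zs.exHG _).choose_spec.1

lemma ZS.ghdec (zs : ZS K G H) (k : K) : ∃ g h : K, g ∈ G ∧ h ∈ H ∧ g * h = k :=
  ⟨(zs.exGH k).choose.1, (zs.exGH k).choose.2, (zs.exGH k).choose.1.2,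
    (zs.exGH k).choose.2.2, (zs.exGH k).choose_spec.1⟩

lemma ZS.hgdec (zs : ZS K G H) (k : K) : ∃ h g : K, h ∈ H ∧ g ∈ G ∧ h * g = k :=
  ⟨(zs.exHG k).choose.1, (zs.exHG k).choose.2, (zs.exHG k).choose.1.2,
    (zs.exHG k).choose.2.2, (zs.exHG k).choose_spec.1⟩

lemma ZS.gh_eq (zs : ZS K G H) {g₁ h₁ g₂ h₂ : K} (m₁ : g₁ ∈ G) (m₂ : h₁ ∈ H)
    (m₃ : g₂ ∈ G) (m₄ : h₂ ∈ H) (e : g₁ * h₁ = g₂ * h₂) : g₁ = g₂ ∧ h₁ = h₂ := by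
  have u := (zs.exGH (g₂ * h₂)).choose_spec
  have A := u.2 (⟨g₁, m₁⟩, ⟨h₁, m₂⟩) e
  have B := u.2 (⟨g₂, m₃⟩, ⟨h₂, m₄⟩) rfl
  have C := A.trans B.symm
  exact ⟨congrArg (fun p : G × H => (p.1 : K)) C,
         congrArg (fun p : G × H => (p.2 : K)) C⟩

lemma ZS.hg_eq (zs : ZS K G H) {h₁ g₁ h₂ g₂ : K} (m₁ : h₁ ∈ H) (m₂ : g₁ ∈ G)
    (m₃ : h₂ ∈ H) (m₄ : g₂ ∈ G) (e : h₁ * g₁ = h₂ * g₂) : h₁ = h₂ ∧ g₁ = g₂ := by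
  have u := (zs.exHG (h₂ * g₂)).choose_spec
  have A := u.2 (⟨h₁, m₁⟩, ⟨g₁, m₂⟩) e
  have B := u.2 (⟨h₂, m₃⟩, ⟨g₂, m₄⟩) rfl
  have C := A.trans B.symm
  exact ⟨congrArg (fun p : H × G => (p.1 : K)) C,
         congrArg (fun p : H × G => (p.2 : K)) C⟩

/-- A Garside monoid has no nontrivial units. -/
lemma units_triv {Δ : K} (gs : GarsideStructure K Δ) {u v : K} (huv : u * v = 1) :
    u = 1 ∧ v = 1 := by
  obtain ⟨l, hl, hlp⟩ := gs.atomic.1 u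
  obtain ⟨l', hl', hlp'⟩ := gs.atomic.1 v
  obtain ⟨N, hN⟩ := gs.atomic.2 1
  have hProd : (l ++ l').prod = 1 := by rw [List.prod_append, hlp, hlp', huv]
  have hAt : ∀ a ∈ l ++ l', MAtom a := by
    intro a ha
    rcases List.mem_append.1 ha with h | h
    · exact hl a h
    · exact hl' a h
  have key : ∀ k : ℕ, ∃ Lk : List K, (∀ a ∈ Lk, MAtom a) ∧ Lk.prod = 1 ∧
      Lk.length = k * (l ++ l').length := by
    intro k
    induction k with
    | zero => exact ⟨[], by simp, by simp, by simp⟩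
    | succ n ih =>
      obtain ⟨L, h1, h2, h3⟩ := ih
      refine ⟨(l ++ l') ++ L, ?_, ?_, ?_⟩
      · intro a ha
        rcases List.mem_append.1 ha with h | h
        · exact hAt a h
        · exact h1 a h
      · rw [List.prod_append, h2, hProd, one_mul]
      · rw [List.length_append, h3]; ring
  have hlen0 : (l ++ l').length = 0 := by
    by_contra hne
    obtain ⟨L, h1, h2, h3⟩ := key (N + 1)
    have hle := hN L h1 h2
    rw [h3] at hle
    have h1le : 1 ≤ (l ++ l').length := Nat.one_le_iff_ne_zero.2 hne
    nlinarith
  rw [List.length_append] at hlen0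
  have hl0 : l = [] := List.length_eq_zero_iff.mp (by omega)
  have hl'0 : l' = [] := List.length_eq_zero_iff.mp (by omega)
  constructor
  · rw [← hlp, hl0, List.prod_nil]
  · rw [← hlp', hl'0, List.prod_nil]

/-- G ∩ H is trivial. -/
lemma mem_triv (zs : ZS K G H) {x : K} (hG : x ∈ G) (hH : x ∈ H) : x = 1 :=
  (zs.gh_eq hG H.one_mem G.one_mem hH (by rw [mul_one, one_mul])).1

/-- G is closed under factors. -/
lemma facG (zs : ZS K G H) {Δ : K} (gs : GarsideStructure K Δ) :
    ∀ x y : K, x * y ∈ G → x ∈ G ∧ y ∈ G := by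
  intro x y hxy
  obtain ⟨g₁, h₁, hg₁, hh₁, hx⟩ := zs.ghdec x
  obtain ⟨g₂, h₂, hg₂, hh₂, hy⟩ := zs.ghdec y
  obtain ⟨g₄, h₄, hg₄, hh₄, h14⟩ := zs.ghdec (h₁ * g₂)
  have e : (g₁ * g₄) * (h₄ * h₂) = (x * y) * 1 := by
    rw [mul_one, ← hx, ← hy]
    calc (g₁ * g₄) * (h₄ * h₂) = g₁ * ((g₄ * h₄) * h₂) := by
          rw [mul_assoc, mul_assoc]
    _ = g₁ * ((h₁ * g₂) * h₂) := by rw [h14]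
    _ = (g₁ * h₁) * (g₂ * h₂) := by rw [mul_assoc, mul_assoc]
  obtain ⟨e1, e2⟩ := zs.gh_eq (G.mul_mem hg₁ hg₄) (H.mul_mem hh₄ hh₂) hxy H.one_mem e
  obtain ⟨h₄1, h₂1⟩ := units_triv gs e2
  have yG : y ∈ G := by rw [← hy, h₂1, mul_one]; exact hg₂
  refine ⟨?_, yG⟩
  obtain ⟨h₅, g₅, hh₅, hg₅, hx'⟩ := zs.hgdec x
  have e' : h₅ * (g₅ * y) = 1 * (x * y) := by
    rw [one_mul, ← mul_assoc, hx']
  obtain ⟨e3, _⟩ := zs.hg_eq hh₅ (G.mul_mem hg₅ yG) H.one_mem hxy e'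
  rw [← hx', e3, one_mul]; exact hg₅

/-- H is closed under factors. -/
lemma facH (zs : ZS K G H) {Δ : K} (gs : GarsideStructure K Δ) :
    ∀ x y : K, x * y ∈ H → x ∈ H ∧ y ∈ H := by
  intro x y hxy
  obtain ⟨h₁, g₁, hh₁, hg₁, hx⟩ := zs.hgdec x
  obtain ⟨h₂, g₂, hh₂, hg₂, hy⟩ := zs.hgdec y
  obtain ⟨h₃, g₃, hh₃, hg₃, h13⟩ := zs.hgdec (g₁ * h₂)
  have e : (h₁ * h₃) * (g₃ * g₂) = (x * y) * 1 := by
    rw [mul_one, ← hx, ← hy]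
    calc (h₁ * h₃) * (g₃ * g₂) = h₁ * ((h₃ * g₃) * g₂) := by
          rw [mul_assoc, mul_assoc]
    _ = h₁ * ((g₁ * h₂) * g₂) := by rw [h13]
    _ = (h₁ * g₁) * (h₂ * g₂) := by rw [mul_assoc, mul_assoc]
  obtain ⟨e1, e2⟩ := zs.hg_eq (H.mul_mem hh₁ hh₃) (G.mul_mem hg₃ hg₂) hxy G.one_mem e
  obtain ⟨g₃1, g₂1⟩ := units_triv gs e2
  have yH : y ∈ H := by rw [← hy, g₂1, mul_one]; exact hh₂
  refine ⟨?_, yH⟩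
  obtain ⟨g₅, h₅, hg₅, hh₅, hx'⟩ := zs.ghdec x
  have e' : g₅ * (h₅ * y) = 1 * (x * y) := by
    rw [one_mul, ← mul_assoc, hx']
  obtain ⟨e3, _⟩ := zs.gh_eq hg₅ (H.mul_mem hh₅ yH) G.one_mem hxy e'
  rw [← hx', e3, one_mul]; exact hh₅

/-- Injectivity via left gcds. -/
lemma inj_left {Δ : K} (gs : GarsideStructure K Δ) {A B : Submonoid K}
    (fA : ∀ x y : K, x * y ∈ A → x ∈ A ∧ y ∈ A)
    (fB : ∀ x y : K, x * y ∈ B → x ∈ B ∧ y ∈ B)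
    (tr : ∀ x : K, x ∈ A → x ∈ B → x = 1)
    {s t u₁ u₂ v₁ v₂ : K} (hu₁ : u₁ ∈ A) (hu₂ : u₂ ∈ A)
    (hv₁ : v₁ ∈ B) (hv₂ : v₂ ∈ B)
    (e₁ : s * u₁ = t * v₁) (e₂ : s * u₂ = t * v₂) : u₁ = u₂ := by
  obtain ⟨d, hd₁, hd₂, hmax⟩ := gs.meet_left (s * u₁) (s * u₂)
  obtain ⟨p, hp⟩ := hmax s ⟨u₁, rfl⟩ ⟨u₂, rfl⟩
  obtain ⟨q, hq⟩ := hmax t ⟨v₁, e₁⟩ ⟨v₂, e₂⟩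
  obtain ⟨z₁, hz₁⟩ := hd₁
  obtain ⟨z₂, hz₂⟩ := hd₂
  have hu₁' : u₁ = p * z₁ := gs.mul_left_cancel s _ _ (by rw [hz₁, hp, mul_assoc])
  have hv₁' : v₁ = q * z₁ := gs.mul_left_cancel t _ _ (by rw [← e₁, hz₁, hq, mul_assoc])
  have hu₂' : u₂ = p * z₂ := gs.mul_left_cancel s _ _ (by rw [hz₂, hp, mul_assoc])
  have hv₂' : v₂ = q * z₂ := gs.mul_left_cancel t _ _ (by rw [← e₂, hz₂, hq, mul_assoc])
  have z₁1 : z₁ = 1 := tr z₁ (fA p z₁ (hu₁' ▸ hu₁)).2 (fB q z₁ (hv₁' ▸ hv₁)).2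
  have z₂1 : z₂ = 1 := tr z₂ (fA p z₂ (hu₂' ▸ hu₂)).2 (fB q z₂ (hv₂' ▸ hv₂)).2
  rw [hu₁', hu₂', z₁1, z₂1]

/-- Injectivity via right gcds. -/
lemma inj_right {Δ : K} (gs : GarsideStructure K Δ) {A B : Submonoid K}
    (fA : ∀ x y : K, x * y ∈ A → x ∈ A ∧ y ∈ A)
    (fB : ∀ x y : K, x * y ∈ B → x ∈ B ∧ y ∈ B)
    (tr : ∀ x : K, x ∈ A → x ∈ B → x = 1)
    {s t u₁ u₂ v₁ v₂ : K} (hu₁ : u₁ ∈ A) (hu₂ : u₂ ∈ A)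
    (hv₁ : v₁ ∈ B) (hv₂ : v₂ ∈ B)
    (e₁ : u₁ * s = v₁ * t) (e₂ : u₂ * s = v₂ * t) : u₁ = u₂ := by
  obtain ⟨d, hd₁, hd₂, hmax⟩ := gs.meet_right (u₁ * s) (u₂ * s)
  obtain ⟨p, hp⟩ := hmax s ⟨u₁, rfl⟩ ⟨u₂, rfl⟩
  obtain ⟨q, hq⟩ := hmax t ⟨v₁, e₁⟩ ⟨v₂, e₂⟩
  obtain ⟨z₁, hz₁⟩ := hd₁
  obtain ⟨z₂, hz₂⟩ := hd₂
  have hu₁' : u₁ = z₁ * p := gs.mul_right_cancel s _ _ (by rw [hz₁, hp, ← mul_assoc])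
  have hv₁' : v₁ = z₁ * q := gs.mul_right_cancel t _ _ (by rw [← e₁, hz₁, hq, ← mul_assoc])
  have hu₂' : u₂ = z₂ * p := gs.mul_right_cancel s _ _ (by rw [hz₂, hp, ← mul_assoc])
  have hv₂' : v₂ = z₂ * q := gs.mul_right_cancel t _ _ (by rw [← e₂, hz₂, hq, ← mul_assoc])
  have z₁1 : z₁ = 1 := tr z₁ (fA z₁ p (hu₁' ▸ hu₁)).1 (fB z₁ q (hv₁' ▸ hv₁)).1
  have z₂1 : z₂ = 1 := tr z₂ (fA z₂ p (hu₂' ▸ hu₂)).1 (fB z₂ q (hv₂' ▸ hv₂)).1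
  rw [hu₁', hu₂', z₁1, z₂1]

/-- Surjectivity from the left lcm: for h ∈ H, a ∈ G there are x ∈ G, y ∈ H
with h * x = a * y. -/
lemma exists_C5 (zs : ZS K G H) {Δ : K} (gs : GarsideStructure K Δ)
    {h a : K} (hh : h ∈ H) (ha : a ∈ G) :
    ∃ x y : K, x ∈ G ∧ y ∈ H ∧ h * x = a * y := by
  obtain ⟨m, ⟨x, hmx⟩, ⟨y, hmy⟩, hmin⟩ := gs.join_left h a
  -- x ∈ G
  obtain ⟨g', h', hg'G, hh'H, hx⟩ := zs.ghdec x
  obtain ⟨α, β, hαG, hβH, hαβ⟩ := zs.ghdec (h * g')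
  obtain ⟨gy, hy, hgyG, hhyH, hyd⟩ := zs.ghdec y
  have e1a : α * (β * h') = m := by rw [← mul_assoc, hαβ, mul_assoc, hx, ← hmx]
  have e1b : (a * gy) * hy = m := by rw [mul_assoc, hyd, ← hmy]
  obtain ⟨eα, eβ⟩ := zs.gh_eq hαG (H.mul_mem hβH hh'H) (G.mul_mem ha hgyG) hhyH
    (e1a.trans e1b.symm)
  have hcm : m ∣ h * g' :=
    hmin (h * g') ⟨g', rfl⟩ ⟨gy * β, by rw [← hαβ, eα, mul_assoc]⟩
  obtain ⟨w, hw⟩ := hcm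
  have hg'xw : g' = x * w := gs.mul_left_cancel h _ _ (by rw [hw, hmx, mul_assoc])
  have hone : h' * w = 1 := gs.mul_left_cancel g' _ _
    (by rw [mul_one, ← mul_assoc, hx, ← hg'xw])
  have h'1 : h' = 1 := (units_triv gs hone).1
  have xG : x ∈ G := by rw [← hx, h'1, mul_one]; exact hg'G
  -- y ∈ H
  obtain ⟨hy2, gy2, hhy2, hgy2, hy2d⟩ := zs.hgdec y
  obtain ⟨β₂, γ₂, hβ₂, hγ₂, hβγ⟩ := zs.hgdec (a * hy2)
  have e2a : β₂ * (γ₂ * gy2) = m := by rw [← mul_assoc, hβγ, mul_assoc, hy2d, ← hmy]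
  obtain ⟨eh, ex⟩ := zs.hg_eq hβ₂ (G.mul_mem hγ₂ hgy2) hh xG (e2a.trans hmx)
  have hcm2 : m ∣ a * hy2 := hmin _ ⟨γ₂, by rw [← eh, hβγ]⟩ ⟨hy2, rfl⟩
  obtain ⟨w₂, hw₂⟩ := hcm2
  have hhy2yw : hy2 = y * w₂ := gs.mul_left_cancel a _ _ (by rw [hw₂, hmy, mul_assoc])
  have hone2 : gy2 * w₂ = 1 := gs.mul_left_cancel hy2 _ _
    (by rw [mul_one, ← mul_assoc, hy2d, ← hhy2yw])
  have gy21 : gy2 = 1 := (units_triv gs hone2).1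
  have yH : y ∈ H := by rw [← hy2d, gy21, mul_one]; exact hhy2
  exact ⟨x, y, xG, yH, hmx.symm.trans hmy⟩

/-- Surjectivity from the right lcm: for g ∈ G, b ∈ H there are x ∈ H, y ∈ G
with x * g = y * b. -/
lemma exists_C5' (zs : ZS K G H) {Δ : K} (gs : GarsideStructure K Δ)
    {g b : K} (hgG : g ∈ G) (hbH : b ∈ H) :
    ∃ x y : K, x ∈ H ∧ y ∈ G ∧ x * g = y * b := by
  obtain ⟨m, ⟨x, hmx⟩, ⟨y, hmy⟩, hmin⟩ := gs.join_right g b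
  -- hmx : m = x * g, hmy : m = y * b
  -- x ∈ H
  obtain ⟨g₁, h₁, hg₁, hh₁, hx⟩ := zs.ghdec x
  obtain ⟨α, β, hα, hβ, hαβ⟩ := zs.ghdec (h₁ * g)
  obtain ⟨γ, δ, hγ, hδ, hyd⟩ := zs.ghdec y
  have e1a : (g₁ * α) * β = m := by rw [mul_assoc, hαβ, ← mul_assoc, hx, ← hmx]
  have e1b : γ * (δ * b) = m := by rw [← mul_assoc, hyd, ← hmy]
  obtain ⟨_, eβ⟩ := zs.gh_eq (G.mul_mem hg₁ hα) hβ hγ (H.mul_mem hδ hbH)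
    (e1a.trans e1b.symm)
  have hbr : RDvd b (h₁ * g) := ⟨α * δ, by rw [mul_assoc, ← eβ, hαβ]⟩
  obtain ⟨w, hw⟩ := hmin (h₁ * g) ⟨h₁, rfl⟩ hbr
  have hh₁wx : h₁ = w * x := gs.mul_right_cancel g _ _ (by rw [hw, hmx, ← mul_assoc])
  have hone : w * g₁ = 1 := gs.mul_right_cancel h₁ _ _
    (by rw [one_mul, mul_assoc, hx, ← hh₁wx])
  have g₁1 : g₁ = 1 := (units_triv gs hone).2
  have xH : x ∈ H := by rw [← hx, g₁1, one_mul]; exact hh₁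
  -- y ∈ G
  obtain ⟨h₂, g₂, hh₂, hg₂, hyy⟩ := zs.hgdec y
  obtain ⟨β₂, α₂, hβ₂, hα₂, hba⟩ := zs.hgdec (g₂ * b)
  have e2a : (h₂ * β₂) * α₂ = m := by rw [mul_assoc, hba, ← mul_assoc, hyy, ← hmy]
  obtain ⟨_, eα⟩ := zs.hg_eq (H.mul_mem hh₂ hβ₂) hα₂ xH hgG (e2a.trans hmx)
  have hgr2 : RDvd g (g₂ * b) := ⟨β₂, by rw [← hba, eα]⟩
  obtain ⟨w₂, hw₂⟩ := hmin (g₂ * b) hgr2 ⟨g₂, rfl⟩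
  have hgw : g₂ = w₂ * y := gs.mul_right_cancel b _ _ (by rw [hw₂, hmy, ← mul_assoc])
  have hone2 : w₂ * h₂ = 1 := gs.mul_right_cancel g₂ _ _
    (by rw [one_mul, mul_assoc, hyy, ← hgw])
  have h₂1 : h₂ = 1 := (units_triv gs hone2).2
  have yG : y ∈ G := by rw [← hyy, h₂1, one_mul]; exact hg₂
  exact ⟨x, y, xH, yG, hmx.symm.trans hmy⟩

end ZSPaper

theorem stmt17 {K : Type*} [Monoid K] {G H : Submonoid K} (zs : ZS K G H)
    (Δ : K) (gs : GarsideStructure K Δ) :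
    (∀ h : H, Function.Bijective (zs.rtr h)) ∧
    (∀ h : H, Function.Bijective (fun g : G => zs.ltl g h)) ∧
    (∀ g : G, Function.Bijective (fun h : H => zs.rtl h g)) ∧
    (∀ g : G, Function.Bijective (zs.ltr g)) := by
  have fG := ZSPaper.facG zs gs
  have fH := ZSPaper.facH zs gs
  have tr : ∀ x : K, x ∈ G → x ∈ H → x = 1 := fun x hG hH => mem_triv zs hG hH
  have tr' : ∀ x : K, x ∈ H → x ∈ G → x = 1 := fun x hH hG => mem_triv zs hG hH
  refine ⟨?_, ?_, ?_, ?_⟩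
  · -- rtr h bijective
    intro h
    constructor
    · intro g₁ g₂ hEq
      have e₁ := (zs.rtr_mul_rtl_s17 h g₁).symm
      have e₂ := (zs.rtr_mul_rtl_s17 h g₂).symm
      rw [← hEq] at e₂
      exact Subtype.ext (inj_left gs fG fH tr g₁.2 g₂.2
        (zs.rtl h g₁).2 (zs.rtl h g₂).2 e₁ e₂)
    · intro a
      obtain ⟨x, y, hxG, hyH, e⟩ := exists_C5 zs gs h.2 a.2
      refine ⟨⟨x, hxG⟩, Subtype.ext ?_⟩
      have spec := zs.rtr_mul_rtl_s17 h ⟨x, hxG⟩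
      exact (zs.gh_eq (zs.rtr h ⟨x, hxG⟩).2 (zs.rtl h ⟨x, hxG⟩).2 a.2 hyH
        (spec.trans e)).1
  · -- fun g => ltl g h bijective
    intro h
    constructor
    · intro g₁ g₂ hEq
      have hEq' : zs.ltl g₁ h = zs.ltl g₂ h := hEq
      have e₁ := (zs.ltr_mul_ltl g₁ h).symm
      have e₂ := (zs.ltr_mul_ltl g₂ h).symm
      rw [← hEq'] at e₂
      exact Subtype.ext (inj_right gs fG fH tr g₁.2 g₂.2
        (zs.ltr g₁ h).2 (zs.ltr g₂ h).2 e₁ e₂)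
    · intro a
      obtain ⟨x, y, hxH, hyG, e⟩ := exists_C5' zs gs a.2 h.2
      refine ⟨⟨y, hyG⟩, Subtype.ext ?_⟩
      have spec := zs.ltr_mul_ltl ⟨y, hyG⟩ h
      exact (zs.hg_eq (zs.ltr ⟨y, hyG⟩ h).2 (zs.ltl ⟨y, hyG⟩ h).2 hxH a.2
        (spec.trans e.symm)).2
  · -- fun h => rtl h g bijective
    intro g
    constructor
    · intro h₁ h₂ hEq
      have hEq' : zs.rtl h₁ g = zs.rtl h₂ g := hEq
      have e₁ := (zs.rtr_mul_rtl_s17 h₁ g).symm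
      have e₂ := (zs.rtr_mul_rtl_s17 h₂ g).symm
      rw [← hEq'] at e₂
      exact Subtype.ext (inj_right gs fH fG tr' h₁.2 h₂.2
        (zs.rtr h₁ g).2 (zs.rtr h₂ g).2 e₁ e₂)
    · intro b
      obtain ⟨x, y, hxH, hyG, e⟩ := exists_C5' zs gs g.2 b.2
      refine ⟨⟨x, hxH⟩, Subtype.ext ?_⟩
      have spec := zs.rtr_mul_rtl_s17 ⟨x, hxH⟩ g
      exact (zs.gh_eq (zs.rtr ⟨x, hxH⟩ g).2 (zs.rtl ⟨x, hxH⟩ g).2 hyG b.2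
        (spec.trans e)).2
  · -- ltr g bijective
    intro g
    constructor
    · intro h₁ h₂ hEq
      have e₁ := (zs.ltr_mul_ltl g h₁).symm
      have e₂ := (zs.ltr_mul_ltl g h₂).symm
      rw [← hEq] at e₂
      exact Subtype.ext (inj_left gs fH fG tr' h₁.2 h₂.2
        (zs.ltl g h₁).2 (zs.ltl g h₂).2 e₁ e₂)
    · intro x
      obtain ⟨x₂, y, hx₂G, hyH, e⟩ := exists_C5 zs gs x.2 g.2
      refine ⟨⟨y, hyH⟩, Subtype.ext ?_⟩
      have spec := zs.ltr_mul_ltl g ⟨y, hyH⟩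
      exact (zs.hg_eq (zs.ltr g ⟨y, hyH⟩).2 (zs.ltl g ⟨y, hyH⟩).2 x.2 hx₂G
        (spec.trans e.symm)).1
end
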